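/- Let F : C → C be an autoequivalence with a natural isomorphism c : F^d ≅ Id_C satisfying F ◁ c = c ▷ F. Then setting F̄_{g^i} = F^i (with F^0 = Id_C) and ε̄_{g^i,g^j} equal to the identity if i+j < d and to F^{i+j−d} ◁ c if i+j ≥ d defines a C_d-action on C, where C_d = ⟨g⟩ is the cyclic group of order d. -/

import Mathlib

open CategoryTheory

universe v u

variable {C : Type u} [Category.{v} C]

/-- Iterated composition `F^n` of an endofunctor (with `F` applied innermost first). -/
def fpow (F : C ⥤ C) : ℕ → C ⥤ C
  | 0 => 𝟭 C
  | n + 1 => F ⋙ fpow F n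

lemma fpow_comp (F : C ⥤ C) (i j : ℕ) : fpow F j ⋙ fpow F i = fpow F (i + j) := by
  induction j with
  | zero => exact Functor.id_comp _
  | succ j ih =>
    show (F ⋙ fpow F j) ⋙ fpow F i = fpow F (i + (j + 1))
    rw [Functor.assoc, ih]
    rfl

lemma fpow_obj_comm (F : C ⥤ C) (n : ℕ) (X : C) :
    F.obj ((fpow F n).obj X) = (fpow F n).obj (F.obj X) := by
  induction n generalizing X with
  | zero => rfl
  | succ n ih => exact ih (F.obj X)

/-- A *compatible pair of order `d`*: an endofunctor `F` with a natural isomorphism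
`c : F^d ≅ 𝟭 C` satisfying `F ◁ c = c ▷ F` (componentwise). -/
def IsCompatiblePair (d : ℕ) (F : C ⥤ C) (c : fpow F d ≅ 𝟭 C) : Prop :=
  ∀ X : C, F.map (c.hom.app X) = eqToHom (fpow_obj_comm F d X) ≫ c.hom.app (F.obj X)

/-- The structural isomorphisms of the `C_d`-action induced by a compatible pair `(F, c)`
of order `d`: the identity when `i + j < d`, and `F^{i+j-d} ◁ c` otherwise. -/
noncomputable def inducedEps (d : ℕ) [NeZero d] (F : C ⥤ C) (c : fpow F d ≅ 𝟭 C)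
    (x y : Multiplicative (ZMod d)) :
    fpow F (ZMod.val (Multiplicative.toAdd y)) ⋙ fpow F (ZMod.val (Multiplicative.toAdd x)) ≅
      fpow F (ZMod.val (Multiplicative.toAdd (x * y))) :=
  if h : ZMod.val (Multiplicative.toAdd x) + ZMod.val (Multiplicative.toAdd y) < d then
    eqToIso (by
      rw [fpow_comp]
      congr 1
      rw [toAdd_mul, ZMod.val_add, Nat.mod_eq_of_lt h])
  else
    eqToIso (by
      rw [fpow_comp, fpow_comp]
      congr 1
      have hx := ZMod.val_lt (Multiplicative.toAdd x)
      have hy := ZMod.val_lt (Multiplicative.toAdd y)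
      omega) ≪≫
    Functor.isoWhiskerRight c
      (fpow F (ZMod.val (Multiplicative.toAdd x) + ZMod.val (Multiplicative.toAdd y) - d)) ≪≫
    eqToIso (by
      rw [Functor.id_comp]
      congr 1
      have hx := ZMod.val_lt (Multiplicative.toAdd x)
      have hy := ZMod.val_lt (Multiplicative.toAdd y)
      rw [toAdd_mul, ZMod.val_add,
        Nat.mod_eq_sub_mod (by omega), Nat.mod_eq_of_lt (by omega)])

lemma fpow_obj_obj (F : C ⥤ C) (a b : ℕ) (X : C) :
    (fpow F a).obj ((fpow F b).obj X) = (fpow F (a + b)).obj X :=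
  (congrArg (fun G : C ⥤ C => G.obj X) (fpow_comp F a b))

lemma fpow_obj_swap (F : C ⥤ C) (a b : ℕ) (X : C) :
    (fpow F a).obj ((fpow F b).obj X) = (fpow F b).obj ((fpow F a).obj X) := by
  rw [fpow_obj_obj, fpow_obj_obj, Nat.add_comm]

lemma fpow_map_map (F : C ⥤ C) (a b : ℕ) {X Y : C} (f : X ⟶ Y) :
    (fpow F a).map ((fpow F b).map f) =
      eqToHom (fpow_obj_obj F a b X) ≫ (fpow F (a + b)).map f ≫
        eqToHom (fpow_obj_obj F a b Y).symm := by
  exact Functor.congr_hom (fpow_comp F a b) f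

lemma map_c_app {d : ℕ} {F : C ⥤ C} {c : fpow F d ≅ 𝟭 C} (hc : IsCompatiblePair d F c)
    (m : ℕ) (X : C) :
    (fpow F m).map (c.hom.app X) =
      eqToHom (fpow_obj_swap F m d X) ≫ c.hom.app ((fpow F m).obj X) := by
  induction m generalizing X with
  | zero => simp [fpow]; exact (Category.id_comp _).symm
  | succ m ih =>
    show (fpow F m).map (F.map (c.hom.app X)) = _
    rw [hc X, Functor.map_comp, eqToHom_map, ih (F.obj X)]
    have : (fpow F m).obj (F.obj X) = (fpow F (m+1)).obj X := rfl
    simp [eqToHom_trans]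
    rfl

lemma inducedEps_app_pos (d : ℕ) [NeZero d] (F : C ⥤ C) (c : fpow F d ≅ 𝟭 C)
    (x y : Multiplicative (ZMod d)) (Y : C)
    (h : ZMod.val (Multiplicative.toAdd x) + ZMod.val (Multiplicative.toAdd y) < d) :
    (inducedEps d F c x y).hom.app Y =
      eqToHom (by
        simp only [Functor.comp_obj, fpow_obj_obj]
        rw [toAdd_mul, ZMod.val_add, Nat.mod_eq_of_lt h]) := by
  rw [inducedEps, dif_pos h]
  simp [eqToHom_app]

lemma inducedEps_app_neg (d : ℕ) [NeZero d] (F : C ⥤ C) (c : fpow F d ≅ 𝟭 C)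
    (x y : Multiplicative (ZMod d)) (Y : C)
    (h : ¬ (ZMod.val (Multiplicative.toAdd x) + ZMod.val (Multiplicative.toAdd y) < d)) :
    (inducedEps d F c x y).hom.app Y =
      eqToHom (by
        simp only [Functor.comp_obj, fpow_obj_obj]
        exact congrArg (fun n => (fpow F n).obj Y) (by omega)) ≫
      (fpow F (ZMod.val (Multiplicative.toAdd x) + ZMod.val (Multiplicative.toAdd y) - d)).map
        (c.hom.app Y) ≫
      eqToHom (by
        have hx := ZMod.val_lt (Multiplicative.toAdd x)
        have hy := ZMod.val_lt (Multiplicative.toAdd y)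
        exact congrArg (fun n => (fpow F n).obj Y) (by
          rw [toAdd_mul, ZMod.val_add,
            Nat.mod_eq_sub_mod (by omega), Nat.mod_eq_of_lt (by omega)])) := by
  rw [inducedEps, dif_neg h]
  simp [eqToHom_app]

lemma fpow_map_map' (F : C ⥤ C) (a b n : ℕ) (hn : n = a + b) {X Y : C} (f : X ⟶ Y) :
    (fpow F a).map ((fpow F b).map f) =
      eqToHom (by rw [fpow_obj_obj, hn]) ≫ (fpow F n).map f ≫
        eqToHom (by rw [fpow_obj_obj, hn]) := by
  subst hn
  exact fpow_map_map F a b f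

lemma inducedEps_app_neg' (d : ℕ) [NeZero d] (F : C ⥤ C) (c : fpow F d ≅ 𝟭 C)
    (x y : Multiplicative (ZMod d)) (Y : C) (n : ℕ)
    (h : ¬ (ZMod.val (Multiplicative.toAdd x) + ZMod.val (Multiplicative.toAdd y) < d))
    (hn : n = ZMod.val (Multiplicative.toAdd x) + ZMod.val (Multiplicative.toAdd y) - d) :
    (inducedEps d F c x y).hom.app Y =
      eqToHom (by
        subst hn
        simp only [Functor.comp_obj, fpow_obj_obj]
        exact congrArg (fun m => (fpow F m).obj Y) (by omega)) ≫
      (fpow F n).map (c.hom.app Y) ≫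
      eqToHom (by
        subst hn
        have hx := ZMod.val_lt (Multiplicative.toAdd x)
        have hy := ZMod.val_lt (Multiplicative.toAdd y)
        exact congrArg (fun m => (fpow F m).obj Y) (by
          rw [toAdd_mul, ZMod.val_add,
            Nat.mod_eq_sub_mod (by omega), Nat.mod_eq_of_lt (by omega)])) := by
  subst hn
  exact inducedEps_app_neg d F c x y Y h

lemma c_app_fpow {d : ℕ} {F : C ⥤ C} {c : fpow F d ≅ 𝟭 C} (hc : IsCompatiblePair d F c)
    (m : ℕ) (X : C) :
    c.hom.app ((fpow F m).obj X) =
      eqToHom (fpow_obj_swap F m d X).symm ≫ (fpow F m).map (c.hom.app X) := by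
  rw [map_c_app hc]
  simp

lemma fpow_isEquivalence (F : C ⥤ C) (hF : F.IsEquivalence) (n : ℕ) :
    (fpow F n).IsEquivalence := by
  induction n with
  | zero => show (𝟭 C).IsEquivalence; infer_instance
  | succ n ih =>
    haveI := hF; haveI := ih
    show (F ⋙ fpow F n).IsEquivalence; infer_instance
set_option maxHeartbeats 1000000 in
/-- Let `F : C ⥤ C` be an autoequivalence with a natural isomorphism
`c : F^d ≅ 𝟭 C` satisfying `F ◁ c = c ▷ F`.  Then `F̄_{gⁱ} = Fⁱ` together with the
isomorphisms `ε̄` (the identity if `i + j < d`, and `F^{i+j-d} ◁ c` otherwise, packaged in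
`inducedEps`) defines a `C_d`-action on `C`: each `F̄_{gⁱ}` is an autoequivalence, and the
2-cocycle condition holds. -/
theorem inducedEps_is_action (d : ℕ) [NeZero d] (hd : 2 ≤ d) (F : C ⥤ C)
    (hF : F.IsEquivalence) (c : fpow F d ≅ 𝟭 C) (hc : IsCompatiblePair d F c) :
    (∀ x : Multiplicative (ZMod d),
      (fpow F (ZMod.val (Multiplicative.toAdd x))).IsEquivalence) ∧
    (∀ (x y z : Multiplicative (ZMod d)) (X : C),
      (inducedEps d F c x y).hom.app
          ((fpow F (ZMod.val (Multiplicative.toAdd z))).obj X) ≫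
        (inducedEps d F c (x * y) z).hom.app X ≫ eqToHom (by rw [mul_assoc]) =
      (fpow F (ZMod.val (Multiplicative.toAdd x))).map
          ((inducedEps d F c y z).hom.app X) ≫
        (inducedEps d F c x (y * z)).hom.app X) := by
  constructor
  · exact fun x => fpow_isEquivalence F hF _
  intro x y z X
  have hx := ZMod.val_lt (Multiplicative.toAdd x)
  have hy := ZMod.val_lt (Multiplicative.toAdd y)
  have hz := ZMod.val_lt (Multiplicative.toAdd z)
  set i := ZMod.val (Multiplicative.toAdd x) with hi
  set j := ZMod.val (Multiplicative.toAdd y) with hj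
  set k := ZMod.val (Multiplicative.toAdd z) with hk
  have hxy : ZMod.val (Multiplicative.toAdd (x * y)) = (i + j) % d := by
    rw [toAdd_mul, ZMod.val_add]
  have hyz : ZMod.val (Multiplicative.toAdd (y * z)) = (j + k) % d := by
    rw [toAdd_mul, ZMod.val_add]
  rcases Nat.lt_or_ge (i + j) d with h1 | h1 <;>
    rcases Nat.lt_or_ge (j + k) d with h2 | h2
  · -- i+j<d, j+k<d
    have hv1 : ZMod.val (Multiplicative.toAdd (x * y)) = i + j := by
      rw [hxy, Nat.mod_eq_of_lt h1]
    have hv2 : ZMod.val (Multiplicative.toAdd (y * z)) = j + k := by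
      rw [hyz, Nat.mod_eq_of_lt h2]
    rcases Nat.lt_or_ge (i + j + k) d with hs | hs
    · -- case A
      rw [inducedEps_app_pos d F c x y _ h1,
        inducedEps_app_pos d F c (x*y) z X (by rw [hv1]; try omega),
        inducedEps_app_pos d F c y z X h2,
        inducedEps_app_pos d F c x (y*z) X (by rw [hv2]; try omega)]
      simp [eqToHom_map]
    · -- case B
      rw [inducedEps_app_pos d F c x y _ h1,
        inducedEps_app_neg' d F c (x*y) z X (i+j+k-d) (by rw [hv1]; try omega)
          (by rw [hv1]; try omega),
        inducedEps_app_pos d F c y z X h2,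
        inducedEps_app_neg' d F c x (y*z) X (i+j+k-d) (by rw [hv2]; try omega)
          (by rw [hv2]; try omega)]
      simp [eqToHom_map]
  · -- i+j<d, j+k≥d : case D
    have hv1 : ZMod.val (Multiplicative.toAdd (x * y)) = i + j := by
      rw [hxy, Nat.mod_eq_of_lt h1]
    have hv2 : ZMod.val (Multiplicative.toAdd (y * z)) = j + k - d := by
      rw [hyz, Nat.mod_eq_sub_mod h2, Nat.mod_eq_of_lt (by omega)]
    rw [inducedEps_app_pos d F c x y _ h1,
      inducedEps_app_neg' d F c (x*y) z X (i+j+k-d) (by rw [hv1]; try omega)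
        (by rw [hv1]; try omega),
      inducedEps_app_neg' d F c y z X (j+k-d) (by omega) (by omega),
      inducedEps_app_pos d F c x (y*z) X (by rw [hv2]; try omega)]
    simp only [Functor.map_comp, eqToHom_map]
    rw [fpow_map_map' F i (j+k-d) (i+j+k-d) (by omega)]
    simp [eqToHom_map]
  · -- i+j≥d, j+k<d : case C
    have hv1 : ZMod.val (Multiplicative.toAdd (x * y)) = i + j - d := by
      rw [hxy, Nat.mod_eq_sub_mod h1, Nat.mod_eq_of_lt (by omega)]
    have hv2 : ZMod.val (Multiplicative.toAdd (y * z)) = j + k := by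
      rw [hyz, Nat.mod_eq_of_lt h2]
    rw [inducedEps_app_neg' d F c x y _ (i+j-d) (by omega) (by omega),
      inducedEps_app_pos d F c (x*y) z X (by rw [hv1]; try omega),
      inducedEps_app_pos d F c y z X h2,
      inducedEps_app_neg' d F c x (y*z) X (i+j+k-d) (by rw [hv2]; try omega)
        (by rw [hv2]; try omega)]
    rw [c_app_fpow hc]
    simp only [Functor.map_comp, eqToHom_map]
    rw [fpow_map_map' F (i+j-d) k (i+j+k-d) (by omega)]
    simp [eqToHom_map]
  · -- i+j≥d, j+k≥d
    have hv1 : ZMod.val (Multiplicative.toAdd (x * y)) = i + j - d := by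
      rw [hxy, Nat.mod_eq_sub_mod h1, Nat.mod_eq_of_lt (by omega)]
    have hv2 : ZMod.val (Multiplicative.toAdd (y * z)) = j + k - d := by
      rw [hyz, Nat.mod_eq_sub_mod h2, Nat.mod_eq_of_lt (by omega)]
    rcases Nat.lt_or_ge (i + j + k) (2 * d) with hs | hs
    · -- case E
      rw [inducedEps_app_neg' d F c x y _ (i+j-d) (by omega) (by omega),
        inducedEps_app_pos d F c (x*y) z X (by rw [hv1]; try omega),
        inducedEps_app_neg' d F c y z X (j+k-d) (by omega) (by omega),
        inducedEps_app_pos d F c x (y*z) X (by rw [hv2]; try omega)]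
      rw [c_app_fpow hc]
      simp only [Functor.map_comp, eqToHom_map]
      rw [fpow_map_map' F (i+j-d) k (i+j+k-d) (by omega),
        fpow_map_map' F i (j+k-d) (i+j+k-d) (by omega)]
      simp [eqToHom_map]
    · -- case F
      rw [inducedEps_app_neg' d F c x y _ (i+j-d) (by omega) (by omega),
        inducedEps_app_neg' d F c (x*y) z X (i+j+k-d-d) (by rw [hv1]; try omega)
          (by rw [hv1]; try omega),
        inducedEps_app_neg' d F c y z X (j+k-d) (by omega) (by omega),
        inducedEps_app_neg' d F c x (y*z) X (i+j+k-d-d) (by rw [hv2]; try omega)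
          (by rw [hv2]; try omega)]
      rw [c_app_fpow hc]
      simp only [Functor.map_comp, eqToHom_map]
      rw [fpow_map_map' F (i+j-d) k (i+j+k-d) (by omega),
        fpow_map_map' F i (j+k-d) (i+j+k-d) (by omega)]
      simp [eqToHom_map]
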